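/- arXiv:1712.03600 — 2 statements merged into one kernel-verified Lean document; each statement's English description precedes it below -/
import Mathlib

section
/- Let R be a commutative ring with 1. Every homogeneous polynomial f(x,y,z) in R[x,y,z] of degree 2 admits a linear Pfaffian R-representation, i.e., there exist 4×4 skew-symmetric matrices A, B, C with entries in R such that Pf(xA + yB + zC) = f(x,y,z). -/
open Matrix MvPolynomial

/-- The Pfaffian of a `2d × 2d` matrix, defined recursively by expansion along the
first row: `Pf(A) = Σ_{j=2}^{2d} (-1)^j a_{1j} Pf(A^{[1,j]})`. -/
def Pf {R : Type*} [CommRing R] : (d : ℕ) → Matrix (Fin (2 * d)) (Fin (2 * d)) R → R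
  | 0, _ => 1
  | d + 1, A =>
      ∑ j : Fin (2 * d + 1), (-1 : R) ^ (j : ℕ) * A 0 j.succ *
        Pf d (fun k l => A ((j.succAbove k).succ) ((j.succAbove l).succ))

/-- A matrix is skew-symmetric (alternating): `Aᵀ = -A` and the diagonal is zero. -/
def IsSkew {R : Type*} [CommRing R] {n : Type*} (A : Matrix n n R) : Prop :=
  Aᵀ = -A ∧ ∀ i, A i i = 0

set_option linter.unnecessarySeqFocus false

/-- Any homogeneous polynomial of degree 2 in three variables is a sum of its six
quadratic monomials. -/
lemma quad_decomp {R : Type*} [CommRing R] (f : MvPolynomial (Fin 3) R)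
    (hf : f.IsHomogeneous 2) :
    f = C (coeff (Finsupp.single 0 1 + Finsupp.single 0 1) f) * (X 0 * X 0)
      + C (coeff (Finsupp.single 1 1 + Finsupp.single 1 1) f) * (X 1 * X 1)
      + C (coeff (Finsupp.single 2 1 + Finsupp.single 2 1) f) * (X 2 * X 2)
      + C (coeff (Finsupp.single 0 1 + Finsupp.single 1 1) f) * (X 0 * X 1)
      + C (coeff (Finsupp.single 0 1 + Finsupp.single 2 1) f) * (X 0 * X 2)
      + C (coeff (Finsupp.single 1 1 + Finsupp.single 2 1) f) * (X 1 * X 2) := by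
  have hdeg : ∀ d : Fin 3 →₀ ℕ, d.degree = d 0 + d 1 + d 2 := by
    intro d
    rw [Finsupp.degree_apply, Finset.sum_subset (Finset.subset_univ d.support)
      (by intro i _ h; simpa using Finsupp.notMem_support_iff.mp h), Fin.sum_univ_three]
  ext m
  have key : ∀ (i j : Fin 3), coeff m (X i * X j : MvPolynomial (Fin 3) R)
      = if Finsupp.single i 1 + Finsupp.single j 1 = m then 1 else 0 := by
    intro i j
    rw [X, X, monomial_mul, coeff_monomial]
    simp
  simp only [coeff_add, coeff_C_mul, key, mul_ite, mul_one, mul_zero]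
  by_cases h : m 0 + m 1 + m 2 = 2
  · have h0 : m 0 ≤ 2 := by omega
    have h1 : m 1 ≤ 2 := by omega
    have h2 : m 2 ≤ 2 := by omega
    have hm : (Finsupp.single (0:Fin 3) (m 0) + Finsupp.single 1 (m 1)
        + Finsupp.single 2 (m 2) : Fin 3 →₀ ℕ) = m := by
      ext i
      fin_cases i <;> simp [Finsupp.single_apply]
    interval_cases hv0 : (m 0) <;> interval_cases hv1 : (m 1) <;> interval_cases hv2 : (m 2) <;>
      first
      | omega
      | (rw [← hm] <;>
         simp [Finsupp.ext_iff, Fin.forall_fin_succ, Finsupp.single_apply, ← Finsupp.single_add])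
  · rw [hf.coeff_eq_zero (by rw [hdeg]; omega)]
    have : ∀ i j : Fin 3, Finsupp.single i 1 + Finsupp.single j 1 ≠ m := by
      intro i j he
      apply h
      rw [← he]
      fin_cases i <;> fin_cases j <;> simp [Finsupp.single_apply]
    simp [this]

/-- The Pfaffian of a `4 × 4` matrix. -/
lemma Pf_two {R : Type*} [CommRing R] (M : Matrix (Fin 4) (Fin 4) R) :
    Pf 2 M = M 0 1 * M 2 3 - M 0 2 * M 1 3 + M 0 3 * M 1 2 := by
  simp [Pf, Fin.sum_univ_succ, Fin.succAbove]
  norm_num [Fin.succ]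
  have h : (⟨3, by norm_num⟩ : Fin 4) = 3 := rfl
  ring

theorem degree_two_pfaffian_rep {R : Type*} [CommRing R]
    (f : MvPolynomial (Fin 3) R) (hf : f.IsHomogeneous 2) :
    ∃ A B C : Matrix (Fin 4) (Fin 4) R, IsSkew A ∧ IsSkew B ∧ IsSkew C ∧
      Pf 2 (Matrix.of fun i j =>
        X 0 * MvPolynomial.C (A i j) + X 1 * MvPolynomial.C (B i j) +
          X 2 * MvPolynomial.C (C i j)) = f := by
  set a := coeff (Finsupp.single 0 1 + Finsupp.single 0 1) f with ha
  set b := coeff (Finsupp.single 1 1 + Finsupp.single 1 1) f with hb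
  set c := coeff (Finsupp.single 2 1 + Finsupp.single 2 1) f with hc
  set d := coeff (Finsupp.single 0 1 + Finsupp.single 1 1) f with hd
  set e := coeff (Finsupp.single 0 1 + Finsupp.single 2 1) f with he
  set g := coeff (Finsupp.single 1 1 + Finsupp.single 2 1) f with hg
  refine ⟨!![0,1,0,0; -1,0,0,0; 0,0,0,a; 0,0,-a,0],
          !![0,0,1,0; 0,0,0,-b; -1,0,0,d; 0,b,-d,0],
          !![0,0,0,1; 0,0,c,-g; 0,-c,0,e; -1,g,-e,0], ?_, ?_, ?_, ?_⟩
  · exact ⟨by ext i j; fin_cases i <;> fin_cases j <;>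
        simp [Matrix.neg_apply, Matrix.vecHead, Matrix.vecTail],
      by intro i; fin_cases i <;> simp [Matrix.vecHead, Matrix.vecTail]⟩
  · exact ⟨by ext i j; fin_cases i <;> fin_cases j <;>
        simp [Matrix.neg_apply, Matrix.vecHead, Matrix.vecTail],
      by intro i; fin_cases i <;> simp [Matrix.vecHead, Matrix.vecTail]⟩
  · exact ⟨by ext i j; fin_cases i <;> fin_cases j <;>
        simp [Matrix.neg_apply, Matrix.vecHead, Matrix.vecTail],
      by intro i; fin_cases i <;> simp [Matrix.vecHead, Matrix.vecTail]⟩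
  · rw [Pf_two]
    simp only [Matrix.of_apply, Matrix.cons_val', Matrix.cons_val_zero, Matrix.cons_val_one,
      Matrix.head_cons, Matrix.empty_val', Matrix.cons_val_fin_one, Matrix.head_fin_const,
      Matrix.cons_val_two, Matrix.cons_val_three, Matrix.tail_cons, C_neg, C_0, C_1]
    rw [quad_decomp f hf, ← ha, ← hb, ← hc, ← hd, ← he, ← hg]
    ring
end

section
/- Let R be a commutative ring with 1. For every a ∈ R and d ≥ 1, the monomial a·x^d (as a homogeneous polynomial in R[x,y,z]) admits a linear Pfaffian R-representation by 2d×2d skew-symmetric matrices. -/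
open Matrix MvPolynomial

/-- The entries of the standard "symplectic-like" skew matrix with pivot `c`. -/
def g {R : Type*} [CommRing R] (c : R) (i j : ℕ) : R :=
  if i % 2 = 0 ∧ j = i + 1 then (if i = 0 then c else 1)
  else if j % 2 = 0 ∧ i = j + 1 then -(if j = 0 then c else 1)
  else 0

lemma g_antisym {R : Type*} [CommRing R] (c : R) (i j : ℕ) : g c j i = - g c i j := by
  unfold g
  split_ifs <;> first | (exfalso; omega) | ring

lemma g_diag {R : Type*} [CommRing R] (c : R) (i : ℕ) : g c i i = 0 := by
  unfold g; split_ifs <;> first | (exfalso; omega) | rfl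

lemma g_shift {R : Type*} [CommRing R] (c : R) (k l : ℕ) :
    g c (k+2) (l+2) = g (1:R) k l := by
  unfold g
  split_ifs <;> first | exact ‹False›.elim | (exfalso; omega) | rfl

lemma g_zero_right {R : Type*} [CommRing R] (c : R) (j : ℕ) (hj : j ≠ 1) :
    g c 0 j = 0 := by
  unfold g; split_ifs <;> first | exact ‹False›.elim | (exfalso; omega) | rfl | simp_all

lemma g_zero_one {R : Type*} [CommRing R] (c : R) : g c 0 1 = c := by
  unfold g; split_ifs <;> first | rfl | (exfalso; omega)

lemma map_g {R S : Type*} [CommRing R] [CommRing S] (f : R →+* S) (c : R) (i j : ℕ) :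
    f (g c i j) = g (f c) i j := by
  unfold g; split_ifs <;> simp

lemma Pf_step {S : Type*} [CommRing S] (x : S) (d : ℕ) (c : S) :
    Pf (d+1) (Matrix.of fun i j : Fin (2*(d+1)) => x * g c (i:ℕ) (j:ℕ)) =
      x * c * Pf d (Matrix.of fun k l : Fin (2*d) => x * g (1:S) (k:ℕ) (l:ℕ)) := by
  rw [Pf]
  rw [Fintype.sum_eq_single (0 : Fin (2*d+1))]
  · have hsub : (fun k l : Fin (2*d) =>
        (Matrix.of fun i j : Fin (2*(d+1)) => x * g c (i:ℕ) (j:ℕ))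
          (((0 : Fin (2*d+1)).succAbove k).succ) (((0 : Fin (2*d+1)).succAbove l).succ))
        = Matrix.of fun k l : Fin (2*d) => x * g (1:S) (k:ℕ) (l:ℕ) := by
      funext k l
      have hk : ((((0 : Fin (2*d+1)).succAbove k).succ : Fin (2*(d+1))) : ℕ) = (k:ℕ) + 2 := by
        simp [Fin.succAbove_zero]
      have hl : ((((0 : Fin (2*d+1)).succAbove l).succ : Fin (2*(d+1))) : ℕ) = (l:ℕ) + 2 := by
        simp [Fin.succAbove_zero]
      simp only [Matrix.of_apply, hk, hl, g_shift]
    rw [hsub]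
    simp [g_zero_one, Nat.mod_eq_of_lt (show 1 < 2*(d+1) by omega)]
  · intro j hj
    have hj' : (j : ℕ) + 1 ≠ 1 := by
      have h0 : ((0 : Fin (2*d+1)) : ℕ) = 0 := by simp
      exact fun h => hj (Fin.ext (by omega))
    simp [g_zero_right c _ hj']

lemma Pf_one {S : Type*} [CommRing S] (x : S) (d : ℕ) :
    Pf d (Matrix.of fun k l : Fin (2*d) => x * g (1:S) (k:ℕ) (l:ℕ)) = x ^ d := by
  induction d with
  | zero => rw [Pf, pow_zero]
  | succ n ih => rw [Pf_step, ih]; ring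

theorem monomial_pfaffian_rep {R : Type*} [CommRing R] (a : R) (d : ℕ) (hd : 1 ≤ d) :
    ∃ A B C : Matrix (Fin (2 * d)) (Fin (2 * d)) R, IsSkew A ∧ IsSkew B ∧ IsSkew C ∧
      Pf d (Matrix.of fun i j =>
        X 0 * MvPolynomial.C (A i j) + X 1 * MvPolynomial.C (B i j) +
          X 2 * MvPolynomial.C (C i j)) = MvPolynomial.C a * X 0 ^ d := by
  obtain ⟨e, rfl⟩ : ∃ e, d = e + 1 := ⟨d - 1, by omega⟩
  refine ⟨Matrix.of fun i j => g a (i:ℕ) (j:ℕ), 0, 0, ?_, ?_, ?_, ?_⟩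
  · constructor
    · ext i j
      simp only [Matrix.transpose_apply, Matrix.neg_apply, Matrix.of_apply]
      exact g_antisym a _ _
    · intro i
      exact g_diag a _
  · exact ⟨by simp, fun i => rfl⟩
  · exact ⟨by simp, fun i => rfl⟩
  · have hM : (Matrix.of fun i j : Fin (2*(e+1)) =>
        X 0 * MvPolynomial.C ((Matrix.of fun i j : Fin (2*(e+1)) => g a (i:ℕ) (j:ℕ)) i j) +
          X 1 * MvPolynomial.C ((0 : Matrix (Fin (2*(e+1))) (Fin (2*(e+1))) R) i j) +
          X 2 * MvPolynomial.C ((0 : Matrix (Fin (2*(e+1))) (Fin (2*(e+1))) R) i j))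
        = Matrix.of fun i j : Fin (2*(e+1)) =>
            (X 0 : MvPolynomial ℕ R) * g (MvPolynomial.C a) (i:ℕ) (j:ℕ) := by
      funext i j
      simp [map_g]
    rw [hM, Pf_step, Pf_one]
    ring
end
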